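/- Let u be an n×n unitary matrix and let (Q_i)_{i∈I} be a finite family of diagonal positive semidefinite matrices with ∑_i Q_i(k,k) = λ_k for each k, where λ is a probability vector. Then ∑_{i∈I} ∑_j η(∑_k Q_i(k,k)|u(k,j)|²) - ∑_{i∈I} ∑_j η(Q_i(j,j)) ≤ ∑_j ∑_k λ_k η(|u(k,j)|²). -/

import Mathlib

lemma negMulLog_add_le {a b : ℝ} (ha : 0 ≤ a) (hb : 0 ≤ b) :
    Real.negMulLog (a + b) ≤ Real.negMulLog a + Real.negMulLog b := by
  unfold Real.negMulLog
  have h1 : a * Real.log a ≤ a * Real.log (a + b) := by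
    rcases eq_or_lt_of_le ha with h | h
    · simp [← h]
    · exact mul_le_mul_of_nonneg_left (Real.log_le_log h (by linarith)) ha
  have h2 : b * Real.log b ≤ b * Real.log (a + b) := by
    rcases eq_or_lt_of_le hb with h | h
    · simp [← h]
    · exact mul_le_mul_of_nonneg_left (Real.log_le_log h (by linarith)) hb
  nlinarith [h1, h2]

lemma negMulLog_sum_le {α : Type*} (s : Finset α) (f : α → ℝ) (hf : ∀ a ∈ s, 0 ≤ f a) :
    Real.negMulLog (∑ a ∈ s, f a) ≤ ∑ a ∈ s, Real.negMulLog (f a) := by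
  induction s using Finset.cons_induction with
  | empty => simp
  | cons a s ha ih =>
    rw [Finset.sum_cons, Finset.sum_cons]
    have h1 : Real.negMulLog (f a + ∑ x ∈ s, f x) ≤
        Real.negMulLog (f a) + Real.negMulLog (∑ x ∈ s, f x) :=
      negMulLog_add_le (hf a (Finset.mem_cons_self a s))
        (Finset.sum_nonneg fun x hx => hf x (Finset.mem_cons_of_mem hx))
    have h2 := ih (fun x hx => hf x (Finset.mem_cons_of_mem hx))
    linarith

theorem entropy_increment_bound {n : ℕ} {I : Type*} [Fintype I]
    (u : Matrix (Fin n) (Fin n) ℂ) (hu : u ∈ Matrix.unitaryGroup (Fin n) ℂ)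
    (Q : I → Fin n → ℝ) (hQ : ∀ i k, 0 ≤ Q i k)
    (lam : Fin n → ℝ) (hsum : ∀ k, ∑ i, Q i k = lam k) (hl1 : ∑ k, lam k = 1) :
    (∑ i, ∑ j, Real.negMulLog (∑ k, Q i k * ‖u k j‖ ^ 2)) -
      (∑ i, ∑ j, Real.negMulLog (Q i j)) ≤
    ∑ j, ∑ k, lam k * Real.negMulLog (‖u k j‖ ^ 2) := by
  set p : Fin n → Fin n → ℝ := fun k j => ‖u k j‖ ^ 2 with hp
  have hpnn : ∀ k j, 0 ≤ p k j := fun k j => sq_nonneg _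
  have hrow : ∀ k, ∑ j, p k j = 1 := by
    intro k
    have h := Matrix.mem_unitaryGroup_iff.mp hu
    have h2 : (u * star u) k k = (1 : Matrix (Fin n) (Fin n) ℂ) k k := by rw [h]
    simp only [Matrix.mul_apply, Matrix.star_apply, Matrix.one_apply_eq,
      Complex.star_def, Complex.mul_conj] at h2
    have : ((∑ j, p k j : ℝ) : ℂ) = ((1 : ℝ) : ℂ) := by
      push_cast
      rw [← h2]
      refine Finset.sum_congr rfl fun j _ => ?_
      simp [hp, Complex.sq_norm]
    exact_mod_cast this
  -- per i bound
  have key : ∀ i, ∑ j, Real.negMulLog (∑ k, Q i k * p k j) ≤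
      (∑ j, Real.negMulLog (Q i j)) + ∑ j, ∑ k, Q i k * Real.negMulLog (p k j) := by
    intro i
    have step1 : ∀ j, Real.negMulLog (∑ k, Q i k * p k j) ≤
        ∑ k, (p k j * Real.negMulLog (Q i k) + Q i k * Real.negMulLog (p k j)) := by
      intro j
      calc Real.negMulLog (∑ k, Q i k * p k j)
          ≤ ∑ k, Real.negMulLog (Q i k * p k j) :=
            negMulLog_sum_le _ _ fun k _ => mul_nonneg (hQ i k) (hpnn k j)
        _ = ∑ k, (p k j * Real.negMulLog (Q i k) + Q i k * Real.negMulLog (p k j)) := by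
            refine Finset.sum_congr rfl fun k _ => ?_
            exact Real.negMulLog_mul _ _
    calc ∑ j, Real.negMulLog (∑ k, Q i k * p k j)
        ≤ ∑ j, ∑ k, (p k j * Real.negMulLog (Q i k) + Q i k * Real.negMulLog (p k j)) :=
          Finset.sum_le_sum fun j _ => step1 j
      _ = (∑ j, ∑ k, p k j * Real.negMulLog (Q i k)) +
            ∑ j, ∑ k, Q i k * Real.negMulLog (p k j) := by
          rw [← Finset.sum_add_distrib]
          exact Finset.sum_congr rfl fun j _ => Finset.sum_add_distrib
      _ = (∑ j, Real.negMulLog (Q i j)) + ∑ j, ∑ k, Q i k * Real.negMulLog (p k j) := by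
          congr 1
          rw [Finset.sum_comm]
          calc ∑ k, ∑ j, p k j * Real.negMulLog (Q i k)
              = ∑ k, (∑ j, p k j) * Real.negMulLog (Q i k) := by
                exact Finset.sum_congr rfl fun k _ => (Finset.sum_mul _ _ _).symm
            _ = ∑ k, Real.negMulLog (Q i k) := by
                refine Finset.sum_congr rfl fun k _ => ?_
                rw [hrow k, one_mul]
  have total : ∑ i, ∑ j, ∑ k, Q i k * Real.negMulLog (p k j) =
      ∑ j, ∑ k, lam k * Real.negMulLog (p k j) := by
    rw [Finset.sum_comm]
    refine Finset.sum_congr rfl fun j _ => ?_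
    rw [Finset.sum_comm]
    refine Finset.sum_congr rfl fun k _ => ?_
    rw [← Finset.sum_mul, hsum k]
  have := Finset.sum_le_sum fun i (_ : i ∈ Finset.univ) => key i
  simp only [Finset.sum_add_distrib] at this
  linarith [this, total.le, total.ge]
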